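/- Let n ≥ 1 and let f = (f_{2m+1})_{m≥0} be a stable x-family satisfying equation (E_x) such that every f_{2m+1} is homogeneous of degree n. Suppose that for every composition (c₁,…,c_r) of n and every m with 2m+1 ≥ r, the coefficient of the packed monomial x₁^{c₁}x₂^{c₂}⋯x_r^{c_r} in f_{2m+1} is zero. Then f_{2m+1} = 0 for all m ≥ 0. -/

import Mathlib

open MvPolynomial
open scoped Classical

noncomputable section

/-- The order condition for a function `r : α → Fin N` (labels `0,…,N-1` standing for
`1,…,N`) with respect to a rank function `ht` on the poset `α`. -/
def OrderCond {α : Type} [PartialOrder α] (ht : α → ℕ) {N : ℕ} (r : α → Fin N) : Prop :=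
  (∀ x y : α, x ≤ y → r x ≤ r y) ∧ ∀ x y : α, x < y → Odd (ht x) → r x < r y

/-- `ht` is a rank function on the poset `α`: minimal elements have height `0` and
covering relations increase the height by exactly one. -/
def IsRanked {α : Type} [PartialOrder α] (ht : α → ℕ) : Prop :=
  (∀ x : α, IsMin x → ht x = 0) ∧ ∀ x y : α, x ⋖ y → ht y = ht x + 1

/-- The polynomial `N_P^(m)`, an element of `ℚ[p₁,…,p_{m+1},q₁,…,q_m]`;
the variable `Sum.inl j` is `p_{j+1}` and `Sum.inr j` is `q_{j+1}` (0-indexed). -/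
def NP (α : Type) [Fintype α] [PartialOrder α] (ht : α → ℕ) (m : ℕ) :
    MvPolynomial (ℕ ⊕ ℕ) ℚ :=
  ∑ r : α → Fin (m + 1),
    if OrderCond ht r ∧ ∀ v, Odd (ht v) → (r v : ℕ) < m then
      ∏ v : α, if Even (ht v) then X (Sum.inl (r v : ℕ)) else X (Sum.inr (r v : ℕ))
    else 0

/-- The polynomial `F_P^(N)`, an element of `ℚ[x₁,…,x_N]`; variable `j` is `x_{j+1}`. -/
def FP (α : Type) [Fintype α] [PartialOrder α] (ht : α → ℕ) (N : ℕ) :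
    MvPolynomial ℕ ℚ :=
  ∑ r : α → Fin N, if OrderCond ht r then ∏ v : α, X (r v : ℕ) else 0

/-- A stable x-family `(f_{2m+1})_{m ≥ 0}`: `f m` stands for `f_{2m+1} ∈ ℚ[x₁,…,x_{2m+1}]`
(variable `k` is `x_{k+1}`), with `f_{2m+3}(x₁,…,x_{2m+1},0,0) = f_{2m+1}`. -/
def IsStableX (f : ℕ → MvPolynomial ℕ ℚ) : Prop :=
  (∀ m, (f m).vars ⊆ Finset.range (2 * m + 1)) ∧
  ∀ m, aeval (fun k => if k < 2 * m + 1 then (X k : MvPolynomial ℕ ℚ) else 0) (f (m + 1)) = f m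

/-- Equation (E_x): for all (paper) `m ≥ 1` and `1 ≤ i ≤ 2m`, substituting `x_{i+1} := x_i`
in `f_{2m+1}` yields `f_{2m-1}(x₁,…,x_{i-1},x_{i+2},…,x_{2m+1})`.  Here `m, i` are 0-indexed:
`f (m+1)` is `f_{2m+3}` and the Lean variable `i` is the paper variable `i+1`. -/
def SatisfiesEx (f : ℕ → MvPolynomial ℕ ℚ) : Prop :=
  ∀ m i : ℕ, i < 2 * m + 2 →
    aeval (fun k => if k = i + 1 then (X i : MvPolynomial ℕ ℚ) else X k) (f (m + 1)) =
    aeval (fun k => if k < i then (X k : MvPolynomial ℕ ℚ) else X (k + 2)) (f m)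

/-- A stable pq-family `(h_m)_{m ≥ 0}` with `h m ∈ ℚ[p₁,…,p_{m+1},q₁,…,q_m]`
(`Sum.inl j` is `p_{j+1}`, `Sum.inr j` is `q_{j+1}`), such that substituting
`p_{m+2} := 0` and `q_{m+1} := 0` in `h (m+1)` yields `h m`. -/
def IsStablePQ (h : ℕ → MvPolynomial (ℕ ⊕ ℕ) ℚ) : Prop :=
  (∀ m, (h m).vars ⊆ (Finset.range (m + 1)).image Sum.inl ∪ (Finset.range m).image Sum.inr) ∧
  ∀ m, aeval (Sum.elim
      (fun j => if j = m + 1 then 0 else (X (Sum.inl j) : MvPolynomial (ℕ ⊕ ℕ) ℚ))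
      (fun j => if j = m then 0 else X (Sum.inr j))) (h (m + 1)) = h m

/-- Equations (E_pq) for a pq-family; the Lean index `i ≤ m` is the paper index `i+1 ≤ m+1`
and `h (m+1)`, `h m` are the paper `h_m`, `h_{m-1}`.  The first equation sets `q_{i+1} := 0`,
the second sets `p_{i+1} := 0`. -/
def SatisfiesEpq (h : ℕ → MvPolynomial (ℕ ⊕ ℕ) ℚ) : Prop :=
  ∀ m i : ℕ, i ≤ m →
    (aeval (Sum.elim (fun j => (X (Sum.inl j) : MvPolynomial (ℕ ⊕ ℕ) ℚ))
        (fun j => if j = i then 0 else X (Sum.inr j))) (h (m + 1)) =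
      aeval (Sum.elim
        (fun j => if j < i then (X (Sum.inl j) : MvPolynomial (ℕ ⊕ ℕ) ℚ)
          else if j = i then X (Sum.inl i) + X (Sum.inl (i + 1)) else X (Sum.inl (j + 1)))
        (fun j => if j < i then X (Sum.inr j) else X (Sum.inr (j + 1)))) (h m)) ∧
    (aeval (Sum.elim (fun j => if j = i then 0 else (X (Sum.inl j) : MvPolynomial (ℕ ⊕ ℕ) ℚ))
        (fun j => X (Sum.inr j))) (h (m + 1)) =
      aeval (Sum.elim
        (fun j => if j < i then (X (Sum.inl j) : MvPolynomial (ℕ ⊕ ℕ) ℚ)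
          else X (Sum.inl (j + 1)))
        (fun j => if j + 1 < i then X (Sum.inr j)
          else if j + 1 = i then X (Sum.inr j) + X (Sum.inr (j + 1))
          else X (Sum.inr (j + 1)))) (h m))

/-- The inverse substitution of (⋆): the x-variable of (0-indexed) Lean index `k`
(paper `x_{k+1}`) expressed in the `p`/`q` variables:
`x_{2i+1} = q_{i+1}+⋯+q_m+p_{i+1}+⋯+p_{m+1}` and `x_{2i} = q_i+⋯+q_m+p_{i+1}+⋯+p_{m+1}`. -/
def xToPQ (m k : ℕ) : MvPolynomial (ℕ ⊕ ℕ) ℚ :=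
  if k % 2 = 0 then
    (∑ j ∈ Finset.Ico (k / 2) m, X (Sum.inr j)) + ∑ j ∈ Finset.Ico (k / 2) (m + 1), X (Sum.inl j)
  else
    (∑ j ∈ Finset.Ico (k / 2) m, X (Sum.inr j)) +
      ∑ j ∈ Finset.Ico (k / 2 + 1) (m + 1), X (Sum.inl j)

/-- The substitution (⋆): `p_i := x_{2i-1} - x_{2i}` (`1 ≤ i ≤ m`),
`q_i := x_{2i} - x_{2i+1}` (`1 ≤ i ≤ m`), `p_{m+1} := x_{2m+1}` (all 0-indexed in Lean). -/
def pqToX (m : ℕ) : ℕ ⊕ ℕ → MvPolynomial ℕ ℚ :=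
  Sum.elim (fun j => if j = m then X (2 * m) else X (2 * j) - X (2 * j + 1))
    (fun j => X (2 * j + 1) - X (2 * j + 2))

/-- The substitution sending every odd-indexed (paper) variable `x_{2i+1}` to `0`
and `x_{2i}` to `y_i` (Lean variable `i-1`). -/
def oddZero : ℕ → MvPolynomial ℕ ℚ := fun k => if k % 2 = 0 then 0 else X (k / 2)

/-- A quasi-symmetric stable family `(g_m)_{m≥0}` with `g m ∈ ℚ[y₁,…,y_m]`
(variable `k` is `y_{k+1}`): `g_{m+1}(y₁,…,y_m,0) = g_m`, and the coefficient of
`y_{a₁}^{c₁}⋯y_{a_r}^{c_r}` (for `a₁ < ⋯ < a_r ≤ m`, `c_j > 0`) equals the coefficient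
of `y₁^{c₁}⋯y_r^{c_r}`. -/
def IsQSymStable (g : ℕ → MvPolynomial ℕ ℚ) : Prop :=
  (∀ m, (g m).vars ⊆ Finset.range m) ∧
  (∀ m, aeval (fun k => if k = m then 0 else (X k : MvPolynomial ℕ ℚ)) (g (m + 1)) = g m) ∧
  ∀ (m r : ℕ) (a c : Fin r → ℕ), StrictMono a → (∀ j, a j < m) → (∀ j, 0 < c j) →
    coeff (∑ j, Finsupp.single (a j) (c j)) (g m) =
    coeff (∑ j : Fin r, Finsupp.single (j : ℕ) (c j)) (g m)

namespace Stmt7Aux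

def sFun (i : ℕ) : ℕ → ℕ := fun k => if k = i + 1 then i else k
def tFun (i : ℕ) : ℕ → ℕ := fun k => if k < i then k else k + 2

lemma tFun_inj (i : ℕ) : Function.Injective (tFun i) := by
  intro a b h
  unfold tFun at h
  split_ifs at h <;> omega

lemma i_not_range (i : ℕ) : i ∉ Set.range (tFun i) := by
  rintro ⟨j, hj⟩; unfold tFun at hj; split_ifs at hj <;> omega

lemma i1_not_range (i : ℕ) : i + 1 ∉ Set.range (tFun i) := by
  rintro ⟨j, hj⟩; unfold tFun at hj; split_ifs at hj <;> omega

lemma mapDomain_sFun (i : ℕ) (u : ℕ →₀ ℕ) :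
    Finsupp.mapDomain (sFun i) u = u.erase (i + 1) + Finsupp.single i (u (i + 1)) := by
  conv_lhs => rw [← Finsupp.erase_add_single (i + 1) u]
  rw [Finsupp.mapDomain_add, Finsupp.mapDomain_single]
  congr 1
  · rw [Finsupp.mapDomain_congr (g := id), Finsupp.mapDomain_id]
    intro x hx
    rw [Finsupp.support_erase, Finset.mem_erase] at hx
    simp [sFun, hx.1]
  · simp [sFun]

/-- `U D i a` is `D` with its value at `i` split as `a` at `i` and `D i - a` at `i+1`. -/
def U (D : ℕ →₀ ℕ) (i a : ℕ) : ℕ →₀ ℕ :=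
  D.erase i + Finsupp.single i a + Finsupp.single (i + 1) (D i - a)

lemma U_apply (D : ℕ →₀ ℕ) (i a k : ℕ) :
    U D i a k = if k = i then a else if k = i + 1 then D i - a + D (i+1) else D k := by
  rcases eq_or_ne k i with rfl | hki
  · simp only [U, Finsupp.add_apply, Finsupp.erase_apply, Finsupp.single_apply]
    split_ifs <;> omega
  · rcases eq_or_ne k (i + 1) with rfl | hki1
    · simp only [U, Finsupp.add_apply, Finsupp.erase_apply, Finsupp.single_apply]
      split_ifs <;> omega
    · simp only [U, Finsupp.add_apply, Finsupp.erase_apply, Finsupp.single_apply]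
      split_ifs <;> omega

lemma mapDomain_sFun_U (i : ℕ) (D : ℕ →₀ ℕ) (hD : D (i + 1) = 0) (a : ℕ) (ha : a ≤ D i) :
    Finsupp.mapDomain (sFun i) (U D i a) = D := by
  rw [mapDomain_sFun]
  ext k
  rcases eq_or_ne k i with rfl | hki
  · simp only [Finsupp.add_apply, Finsupp.erase_apply, Finsupp.single_apply, U_apply]
    split_ifs <;> omega
  · rcases eq_or_ne k (i + 1) with rfl | hki1
    · simp only [Finsupp.add_apply, Finsupp.erase_apply, Finsupp.single_apply, U_apply]
      split_ifs <;> omega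
    · simp only [Finsupp.add_apply, Finsupp.erase_apply, Finsupp.single_apply, U_apply]
      split_ifs <;> omega

lemma mapDomain_sFun_eq_iff (i : ℕ) (D : ℕ →₀ ℕ) (hD : D (i + 1) = 0) (u : ℕ →₀ ℕ) :
    Finsupp.mapDomain (sFun i) u = D ↔ ∃ a ∈ Finset.range (D i + 1), u = U D i a := by
  constructor
  · intro h
    rw [mapDomain_sFun] at h
    have hval : ∀ k, (u.erase (i + 1)) k + (Finsupp.single i (u (i + 1))) k = D k := by
      intro k; rw [← Finsupp.add_apply, h]
    have hiu : u i + u (i + 1) = D i := by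
      have hi := hval i
      simp only [Finsupp.erase_apply, Finsupp.single_apply] at hi
      split_ifs at hi <;> omega
    refine ⟨u i, Finset.mem_range.mpr (by omega), ?_⟩
    ext k
    rcases eq_or_ne k i with rfl | hki
    · rw [U_apply]; split_ifs <;> omega
    · rcases eq_or_ne k (i + 1) with rfl | hki1
      · rw [U_apply]; split_ifs <;> omega
      · have hk := hval k
        simp only [Finsupp.erase_apply, Finsupp.single_apply] at hk
        rw [U_apply]
        split_ifs at hk ⊢ <;> omega
  · rintro ⟨a, ha, rfl⟩
    exact mapDomain_sFun_U i D hD a (by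
      have := Finset.mem_range.mp ha; omega)

lemma coeff_rename_sFun (i : ℕ) (p : MvPolynomial ℕ ℚ) (D : ℕ →₀ ℕ) (hD : D (i + 1) = 0) :
    coeff D (rename (sFun i) p) =
      ∑ a ∈ Finset.range (D i + 1), coeff (U D i a) p := by
  have hUinj : Set.InjOn (U D i) (Finset.range (D i + 1)) := by
    intro a _ b _ hab
    have := congrArg (fun v : ℕ →₀ ℕ => v i) hab
    simpa [U_apply] using this
  conv_lhs => rw [← support_sum_monomial_coeff p]
  rw [map_sum, coeff_sum]
  simp only [rename_monomial, coeff_monomial]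
  have h1 : ∀ u ∈ p.support,
      (if Finsupp.mapDomain (sFun i) u = D then coeff u p else 0)
        = if u ∈ (Finset.range (D i + 1)).image (U D i) then coeff u p else 0 := by
    intro u _
    refine if_congr ?_ rfl rfl
    rw [mapDomain_sFun_eq_iff i D hD u, Finset.mem_image]
    constructor
    · rintro ⟨a, ha, rfl⟩; exact ⟨a, ha, rfl⟩
    · rintro ⟨a, ha, rfl⟩; exact ⟨a, ha, rfl⟩
  rw [Finset.sum_congr rfl h1, Finset.sum_ite_mem]
  rw [Finset.sum_subset Finset.inter_subset_right (fun u hu hu2 => ?_)]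
  · exact Finset.sum_image fun a ha b hb hab => hUinj ha hb hab
  · have : u ∉ p.support := fun hs => hu2 (Finset.mem_inter.mpr ⟨hs, hu⟩)
    exact notMem_support_iff.mp this

lemma hex_rename (f : ℕ → MvPolynomial ℕ ℚ) (hex : SatisfiesEx f) (m i : ℕ)
    (hi : i < 2 * m + 2) :
    rename (sFun i) (f (m + 1)) = rename (tFun i) (f m) := by
  have h := hex m i hi
  have e1 : (fun k => if k = i + 1 then (X i : MvPolynomial ℕ ℚ) else X k) = X ∘ sFun i := by
    funext k; simp only [Function.comp, sFun]; split_ifs <;> rfl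
  have e2 : (fun k => if k < i then (X k : MvPolynomial ℕ ℚ) else X (k + 2)) = X ∘ tFun i := by
    funext k; simp only [Function.comp, tFun]; split_ifs <;> rfl
  rw [e1, e2] at h
  rw [rename_eq_aeval, rename_eq_aeval]
  exact h

lemma coeff_contract (f : ℕ → MvPolynomial ℕ ℚ) (hex : SatisfiesEx f) (m i : ℕ)
    (hi : i < 2 * m + 2) (u : ℕ →₀ ℕ) :
    coeff (Finsupp.mapDomain (tFun i) u) (f (m + 1)) = coeff u (f m) := by
  have h := hex_rename f hex m i hi
  have hD1 : (Finsupp.mapDomain (tFun i) u) (i + 1) = 0 :=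
    Finsupp.mapDomain_notin_range _ _ (i1_not_range i)
  have hD0 : (Finsupp.mapDomain (tFun i) u) i = 0 :=
    Finsupp.mapDomain_notin_range _ _ (i_not_range i)
  have hL : coeff (Finsupp.mapDomain (tFun i) u) (rename (sFun i) (f (m + 1)))
      = coeff (Finsupp.mapDomain (tFun i) u) (f (m + 1)) := by
    rw [coeff_rename_sFun i _ _ hD1, hD0, Finset.sum_range_one]
    congr 1
    ext k
    rcases eq_or_ne k i with rfl | hki
    · rw [U_apply]; split_ifs <;> omega
    · rcases eq_or_ne k (i + 1) with rfl | hki1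
      · rw [U_apply]; split_ifs <;> omega
      · rw [U_apply]; split_ifs <;> omega
  rw [← hL, h, coeff_rename_mapDomain _ (tFun_inj i)]

lemma sum_coeff_split (f : ℕ → MvPolynomial ℕ ℚ) (hex : SatisfiesEx f) (m i : ℕ)
    (hi : i < 2 * m + 2) (D : ℕ →₀ ℕ) (hD1 : D (i + 1) = 0) (hD0 : D i ≠ 0) :
    ∑ a ∈ Finset.range (D i + 1), coeff (U D i a) (f (m + 1)) = 0 := by
  have h := hex_rename f hex m i hi
  rw [← coeff_rename_sFun i _ _ hD1, h]
  apply coeff_rename_eq_zero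
  intro u hu
  exfalso
  apply hD0
  rw [← hu]
  exact Finsupp.mapDomain_notin_range _ _ (i_not_range i)

end Stmt7Aux

open Stmt7Aux in
theorem stmt7' (n : ℕ) (hn : 1 ≤ n) (f : ℕ → MvPolynomial ℕ ℚ)
    (hst : IsStableX f) (hex : SatisfiesEx f)
    (hhom : ∀ m, (f m).IsHomogeneous n)
    (hcoeff : ∀ c : List ℕ, (∀ a ∈ c, 0 < a) → c.sum = n →
      ∀ m, c.length ≤ 2 * m + 1 →
        coeff (∑ k ∈ Finset.range c.length, Finsupp.single k (c.getD k 0)) (f m) = 0) :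
    ∀ m, f m = 0 := by
  classical
  have hzero : ∀ d : ℕ →₀ ℕ, ∃ j, d j = 0 := by
    intro d
    refine ⟨d.support.sup id + 1, ?_⟩
    by_contra h
    have h1 : d.support.sup id + 1 ∈ d.support := Finsupp.mem_support_iff.mpr h
    have h2 := Finset.le_sup (f := id) h1
    simp only [id] at h2
    omega
  have hbase : ∀ m (d : ℕ →₀ ℕ), (∀ k ∈ d.support, k < 2 * m + 1) →
      d.support.sup id ≤ Nat.find (hzero d) → coeff d (f m) = 0 := by
    intro m d hd hMg
    by_cases hd0 : d = 0
    · subst hd0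
      refine (hhom m).coeff_eq_zero ?_
      rw [map_zero]
      omega
    · have hne : d.support.Nonempty := Finsupp.support_nonempty_iff.mpr hd0
      obtain ⟨b, hb, hbe⟩ := Finset.exists_mem_eq_sup d.support hne id
      set M := d.support.sup id with hM
      have hdM : d M ≠ 0 := by rw [hbe]; exact Finsupp.mem_support_iff.mp hb
      have hfull : ∀ j, j ≤ M → d j ≠ 0 := by
        intro j hj hj0
        have h1 : Nat.find (hzero d) ≤ j := Nat.find_le hj0
        have h2 : j = M := by omega
        rw [h2] at hj0
        exact hdM hj0
      have hsupp_eq : d.support = Finset.range (M + 1) := by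
        ext j
        simp only [Finsupp.mem_support_iff, Finset.mem_range]
        constructor
        · intro hj
          have := Finset.le_sup (f := id) (Finsupp.mem_support_iff.mpr hj)
          simp only [id] at this
          omega
        · intro hj; exact hfull j (by omega)
      by_contra hc
      have hdeg : Finsupp.degree d = n := by
        by_contra h; exact hc ((hhom m).coeff_eq_zero h)
      set c : List ℕ := List.ofFn (fun j : Fin (M + 1) => d j) with hcdef
      have hlen : c.length = M + 1 := List.length_ofFn
      have hpos : ∀ a ∈ c, 0 < a := by
        intro a ha
        rw [hcdef, List.mem_ofFn] at ha
        obtain ⟨j, hj⟩ := ha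
        rw [← hj]
        exact Nat.pos_of_ne_zero (hfull j (by omega))
      have hsum : c.sum = n := by
        rw [hcdef, List.sum_ofFn, ← hdeg, Finsupp.degree_apply, hsupp_eq, Finset.sum_range]
      have hM2m : M < 2 * m + 1 := hd M (Finsupp.mem_support_iff.mpr hdM)
      have happ := hcoeff c hpos hsum m (by rw [hlen]; omega)
      have hmono : (∑ k ∈ Finset.range c.length, Finsupp.single k (c.getD k 0)) = d := by
        rw [hlen]
        have hterm : ∀ k ∈ Finset.range (M + 1),
            Finsupp.single k (c.getD k 0) = Finsupp.single k (d k) := by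
          intro k hk
          rw [Finset.mem_range] at hk
          congr 1
          rw [hcdef, List.getD_eq_getElem _ _ (by rw [List.length_ofFn]; exact hk),
            List.getElem_ofFn]
        rw [Finset.sum_congr rfl hterm, ← hsupp_eq]
        exact Finsupp.sum_single d
      rw [hmono] at happ
      exact hc happ
  have key : ∀ N m (d : ℕ →₀ ℕ), (∀ k ∈ d.support, k < 2 * m + 1) →
      d.support.sup id - Nat.find (hzero d) ≤ N → coeff d (f m) = 0 := by
    intro N
    induction N with
    | zero =>
      intro m d hd hN
      exact hbase m d hd (by omega)
    | succ N ih =>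
      intro m d hd hN
      by_cases hMg : d.support.sup id ≤ Nat.find (hzero d)
      · exact hbase m d hd hMg
      · set M := d.support.sup id with hMdef
        set g := Nat.find (hzero d) with hgdef
        have hgM : g < M := by omega
        have hgz : d g = 0 := Nat.find_spec (hzero d)
        have hglt : ∀ j, j < g → d j ≠ 0 := fun j hj => Nat.find_min (hzero d) hj
        have hdM : d M ≠ 0 := by
          have hne : d.support.Nonempty := by
            rcases Finset.eq_empty_or_nonempty d.support with h | h
            · exfalso
              have : M = 0 := by rw [hMdef, h]; rfl
              omega
            · exact h
          obtain ⟨b, hb, hbe⟩ := Finset.exists_mem_eq_sup d.support hne id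
          rw [hMdef, hbe]
          exact Finsupp.mem_support_iff.mp hb
        have hM2m : M < 2 * m + 1 := hd M (Finsupp.mem_support_iff.mpr hdM)
        by_cases hc1 : d (g + 1) = 0
        · -- contraction case
          have hMg2 : g + 2 ≤ M := by
            rcases Nat.lt_or_ge (g + 1) M with h | h
            · omega
            · exfalso
              apply hdM
              have hMeq : M = g + 1 := by omega
              rw [hMeq]; exact hc1
          obtain ⟨m', rfl⟩ : ∃ m', m = m' + 1 := ⟨m - 1, by omega⟩
          have hsub : ↑d.support ⊆ Set.range (tFun g) := by
            intro k hk
            have hk' : d k ≠ 0 := Finsupp.mem_support_iff.mp hk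
            rcases Nat.lt_or_ge k g with h | h
            · exact ⟨k, by simp [tFun, h]⟩
            · have hkg : k ≠ g := fun he => hk' (by rw [he]; exact hgz)
              have hkg1 : k ≠ g + 1 := fun he => hk' (by rw [he]; exact hc1)
              refine ⟨k - 2, ?_⟩
              simp only [tFun]
              rw [if_neg (by omega)]
              omega
          set u := Finsupp.comapDomain (tFun g) d ((tFun_inj g).injOn) with hudef
          have hmap : Finsupp.mapDomain (tFun g) u = d :=
            Finsupp.mapDomain_comapDomain (f := tFun g) (tFun_inj g) d hsub
          have hucoeff := coeff_contract f hex m' g (by omega) u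
          rw [hmap] at hucoeff
          rw [hucoeff]
          have huapp : ∀ k, u k = d (tFun g k) := fun k => rfl
          apply ih m'
          · intro k hk
            have hk' : u k ≠ 0 := Finsupp.mem_support_iff.mp hk
            rw [huapp k] at hk'
            have h2 : tFun g k < 2 * (m' + 1) + 1 := hd _ (Finsupp.mem_support_iff.mpr hk')
            simp only [tFun] at h2
            split_ifs at h2 with h
            · omega
            · omega
          · have hsupu : u.support.sup id ≤ M - 2 := by
              apply Finset.sup_le
              intro k hk
              have hk' : u k ≠ 0 := Finsupp.mem_support_iff.mp hk
              rw [huapp k] at hk'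
              have hle : tFun g k ≤ M := by
                have := Finset.le_sup (f := id) (Finsupp.mem_support_iff.mpr hk')
                simpa only [id] using this
              simp only [tFun] at hle
              simp only [id]
              split_ifs at hle <;> omega
            have hfindu : g ≤ Nat.find (hzero u) := by
              rw [Nat.le_find_iff]
              intro j hj
              rw [huapp j]
              simp only [tFun, if_pos hj]
              exact hglt j hj
            omega
        · -- splitting case
          have hg1le : g + 1 ≤ M := by
            have := Finset.le_sup (f := id) (Finsupp.mem_support_iff.mpr hc1)
            simpa only [id] using this
          obtain ⟨m', rfl⟩ : ∃ m', m = m' + 1 := ⟨m - 1, by omega⟩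
          set D : ℕ →₀ ℕ := d.erase (g + 1) + Finsupp.single g (d (g + 1)) with hDdef
          have hDg1 : D (g + 1) = 0 := by
            simp only [hDdef, Finsupp.add_apply, Finsupp.erase_apply, Finsupp.single_apply]
            split_ifs <;> omega
          have hDg : D g = d (g + 1) := by
            simp only [hDdef, Finsupp.add_apply, Finsupp.erase_apply, Finsupp.single_apply]
            split_ifs <;> omega
          have hDother : ∀ k, k ≠ g → k ≠ g + 1 → D k = d k := by
            intro k h1 h2
            simp only [hDdef, Finsupp.add_apply, Finsupp.erase_apply, Finsupp.single_apply]
            split_ifs <;> omega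
          have h2 := sum_coeff_split f hex m' g (by omega) D hDg1 (by rw [hDg]; exact hc1)
          rw [hDg, Finset.sum_range_succ'] at h2
          have hU0 : U D g 0 = d := by
            ext k
            rcases eq_or_ne k g with rfl | h1
            · rw [U_apply]; split_ifs <;> omega
            · rcases eq_or_ne k (g + 1) with rfl | h2'
              · rw [U_apply]; split_ifs <;> omega
              · have h3 := hDother k h1 h2'
                rw [U_apply]; split_ifs <;> omega
          have hz2 : ∀ a ∈ Finset.range (d (g + 1)),
              coeff (U D g (a + 1)) (f (m' + 1)) = 0 := by
            intro a ha
            apply ih (m' + 1)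
            · intro k hk
              have hk' : U D g (a + 1) k ≠ 0 := Finsupp.mem_support_iff.mp hk
              rw [U_apply] at hk'
              split_ifs at hk' with h1 h2'
              · omega
              · omega
              · rw [hDother k h1 h2'] at hk'
                exact hd k (Finsupp.mem_support_iff.mpr hk')
            · have hsupU : (U D g (a + 1)).support.sup id ≤ M := by
                apply Finset.sup_le
                intro k hk
                have hk' : U D g (a + 1) k ≠ 0 := Finsupp.mem_support_iff.mp hk
                rw [U_apply] at hk'
                simp only [id]
                split_ifs at hk' with h1 h2'
                · omega
                · omega
                · rw [hDother k h1 h2'] at hk'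
                  have := Finset.le_sup (f := id) (Finsupp.mem_support_iff.mpr hk')
                  simpa only [id] using this
              have hfindU : g + 1 ≤ Nat.find (hzero (U D g (a + 1))) := by
                rw [Nat.le_find_iff]
                intro j hj
                rw [U_apply]
                split_ifs with h1 h2'
                · exact not_false
                · rw [h2'] at hj
                  exact absurd hj (lt_irrefl _)
                · rw [hDother j h1 h2']
                  exact hglt j (by omega)
              omega
          rw [Finset.sum_eq_zero hz2, zero_add, hU0] at h2
          exact h2
  intro m
  apply MvPolynomial.ext
  intro d
  rw [coeff_zero]
  by_cases hsupp : ∀ k ∈ d.support, k < 2 * m + 1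
  · exact key (d.support.sup id) m d hsupp (by omega)
  · push_neg at hsupp
    obtain ⟨k, hk, hk2⟩ := hsupp
    by_contra hc
    have hdsupp : d ∈ (f m).support := mem_support_iff.mpr hc
    have hkv : k ∈ (f m).vars := (mem_vars k).mpr ⟨d, hdsupp, hk⟩
    have := hst.1 m hkv
    rw [Finset.mem_range] at this
    omega

/-- Let `n ≥ 1` and `f` be a stable x-family satisfying (E_x) with
every `f_{2m+1}` homogeneous of degree `n`.  If for every composition `c` of `n` and
every `m` with `c.length ≤ 2m+1` the coefficient of the packed monomial
`x₁^{c₁}⋯x_r^{c_r}` in `f_{2m+1}` vanishes, then `f_{2m+1} = 0` for all `m`. -/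
theorem stmt7 (n : ℕ) (hn : 1 ≤ n) (f : ℕ → MvPolynomial ℕ ℚ)
    (hst : IsStableX f) (hex : SatisfiesEx f)
    (hhom : ∀ m, (f m).IsHomogeneous n)
    (hcoeff : ∀ c : List ℕ, (∀ a ∈ c, 0 < a) → c.sum = n →
      ∀ m, c.length ≤ 2 * m + 1 →
        coeff (∑ k ∈ Finset.range c.length, Finsupp.single k (c.getD k 0)) (f m) = 0) :
    ∀ m, f m = 0 :=
  stmt7' n hn f hst hex hhom hcoeff
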